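/- Let F = Exp(X) = (x + p, y + q) be the tangent-to-identity formal diffeomorphism generated by a formal vector field X = a ∂/∂x + b ∂/∂y of order ≥ 2. Then the origin is an isolated zero of X (i.e., the ideal (a,b) contains a power of the maximal ideal (x,y)) if and only if the origin is an isolated fixed point of F (i.e., the ideal (p,q) contains a power of the maximal ideal). -/

import Mathlib

open Finsupp

noncomputable section

abbrev F2 : Type := MvPowerSeries (Fin 2) ℂ

/-- total degree of a monomial exponent -/
def deg (d : Fin 2 →₀ ℕ) : ℕ := d 0 + d 1

/-- the exponent (m, n) -/
def idx (m n : ℕ) : Fin 2 →₀ ℕ := Finsupp.single 0 m + Finsupp.single 1 n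

/-- partial derivative of a formal power series -/
def pd (i : Fin 2) (f : F2) : F2 :=
  fun d => ((d i : ℂ) + 1) * MvPowerSeries.coeff (d + Finsupp.single i 1) f

/-- the derivation a ∂/∂x + b ∂/∂y applied to g -/
def vf (a b g : F2) : F2 := a * pd 0 g + b * pd 1 g

/-- `ordGE f k` : the order ν(f) is at least k -/
def ordGE (f : F2) (k : ℕ) : Prop :=
  ∀ d : Fin 2 →₀ ℕ, deg d < k → MvPowerSeries.coeff d f = 0

/-- exp X (g) = Σ_j (1/j!) X^j(g), coefficientwise -/
def expX (a b g : F2) : F2 :=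
  fun d => ∑' j : ℕ, ((j.factorial : ℂ))⁻¹ * MvPowerSeries.coeff d ((vf a b)^[j] g)

/-- degree-k homogeneous part -/
def HT (k : ℕ) (f : F2) : F2 :=
  fun d => if deg d = k then MvPowerSeries.coeff d f else 0

/-- substitution y := x·v :  f(x, xv), in coordinates (x, v) -/
def blowup (f : F2) : F2 :=
  fun d => if d 1 ≤ d 0 then MvPowerSeries.coeff (idx (d 0 - d 1) (d 1)) f else 0

/-- `dehom k f` = f_k(1, v), where f_k is the degree-k homogeneous part of f -/
def dehom (k : ℕ) (f : F2) : F2 :=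
  fun d => if d 0 = 0 ∧ d 1 ≤ k then MvPowerSeries.coeff (idx (k - d 1) (d 1)) f else 0

/-- evaluation of the degree-k homogeneous part of f at (1, v0) -/
def evk (k : ℕ) (v0 : ℂ) (f : F2) : ℂ :=
  ∑ n ∈ Finset.range (k+1), MvPowerSeries.coeff (idx (k-n) n) f * v0 ^ n

/-- the linear change of coordinates f(x, y) ↦ f(x, y + v0·x) -/
def shear (v0 : ℂ) (f : F2) : F2 :=
  fun d => ∑ j ∈ Finset.range (deg d + 1),
    if d 1 ≤ j ∧ j - d 1 ≤ d 0 then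
      (j.choose (d 1) : ℂ) * v0 ^ (j - d 1) *
        MvPowerSeries.coeff (idx (d 0 - (j - d 1)) j) f
    else 0

/-- the coordinate x -/
def Xv : F2 := MvPowerSeries.X 0
/-- the coordinate y (alias v in the blow-up chart) -/
def Yv : F2 := MvPowerSeries.X 1

end

noncomputable section

namespace IsoAux

lemma deg_add (d e : Fin 2 →₀ ℕ) : deg (d + e) = deg d + deg e := by
  simp [deg]; ring

lemma deg_single (i : Fin 2) : deg (Finsupp.single i 1) = 1 := by
  fin_cases i <;> simp [deg]

lemma ordGE_mul {f g : F2} {kf kg : ℕ} (hf : ordGE f kf) (hg : ordGE g kg) :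
    ordGE (f * g) (kf + kg) := by
  intro d hd
  rw [MvPowerSeries.coeff_mul]
  refine Finset.sum_eq_zero fun p hp => ?_
  rw [Finset.HasAntidiagonal.mem_antidiagonal] at hp
  have hdeg : deg p.1 + deg p.2 = deg d := by rw [← deg_add, hp]
  by_cases h1 : deg p.1 < kf
  · rw [hf _ h1, zero_mul]
  · have h2 : deg p.2 < kg := by omega
    rw [hg _ h2, mul_zero]

lemma ordGE_pd {f : F2} {k : ℕ} (i : Fin 2) (hf : ordGE f (k + 1)) :
    ordGE (pd i f) k := by
  intro d hd
  show ((d i : ℂ) + 1) * MvPowerSeries.coeff (d + Finsupp.single i 1) f = 0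
  rw [hf _ (by rw [deg_add, deg_single]; omega), mul_zero]

variable {a b : F2} (ha : ordGE a 2) (hb : ordGE b 2)

include ha hb in
lemma ordGE_vf {g : F2} {k : ℕ} (hg : ordGE g (k + 1)) :
    ordGE (vf a b g) (k + 2) := by
  intro d hd
  show MvPowerSeries.coeff d (a * pd 0 g + b * pd 1 g) = 0
  rw [map_add, ordGE_mul ha (ordGE_pd 0 hg) d (by omega),
    ordGE_mul hb (ordGE_pd 1 hg) d (by omega), add_zero]

include ha hb in
lemma ordGE_iter {g : F2} (hg : ordGE g 1) (j : ℕ) :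
    ordGE ((vf a b)^[j] g) (j + 1) := by
  induction j with
  | zero => simpa using hg
  | succ n ih =>
    rw [Function.iterate_succ_apply']
    exact ordGE_vf ha hb ih

/-- the power series with coefficients A_i(d) = Σ_j 1/(j+1)! · coeff d (∂_i X^j g) -/
def AA (a b g : F2) (i : Fin 2) : F2 :=
  fun d => ∑ j ∈ Finset.range (deg d + 1),
    (((j + 1).factorial : ℂ))⁻¹ * MvPowerSeries.coeff d (pd i ((vf a b)^[j] g))

lemma coeff_AA (a b g : F2) (i : Fin 2) (d : Fin 2 →₀ ℕ) :
    MvPowerSeries.coeff d (AA a b g i) =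
      ∑ j ∈ Finset.range (deg d + 1),
        (((j + 1).factorial : ℂ))⁻¹ * MvPowerSeries.coeff d (pd i ((vf a b)^[j] g)) := rfl

include ha hb in
lemma coeff_mul_AA {g : F2} (hg : ordGE g 1) (c : F2) (i : Fin 2) (d : Fin 2 →₀ ℕ) :
    MvPowerSeries.coeff d (c * AA a b g i) =
      ∑ j ∈ Finset.range (deg d + 1),
        (((j + 1).factorial : ℂ))⁻¹ *
          MvPowerSeries.coeff d (c * pd i ((vf a b)^[j] g)) := by
  have hu : ∀ j : ℕ, ordGE (pd i ((vf a b)^[j] g)) j :=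
    fun j => ordGE_pd i (ordGE_iter ha hb hg j)
  rw [MvPowerSeries.coeff_mul]
  have step : ∀ p ∈ Finset.HasAntidiagonal.antidiagonal d,
      MvPowerSeries.coeff p.1 c * MvPowerSeries.coeff p.2 (AA a b g i) =
      ∑ j ∈ Finset.range (deg d + 1),
        (((j + 1).factorial : ℂ))⁻¹ *
          (MvPowerSeries.coeff p.1 c *
            MvPowerSeries.coeff p.2 (pd i ((vf a b)^[j] g))) := by
    intro p hp
    rw [Finset.HasAntidiagonal.mem_antidiagonal] at hp
    have hle : deg p.2 ≤ deg d := by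
      have := deg_add p.1 p.2
      rw [hp] at this; omega
    rw [coeff_AA]
    rw [Finset.sum_subset (Finset.range_subset_range.2 (Nat.succ_le_succ hle))
      (fun j _ hj => by
        rw [Finset.mem_range, not_lt] at hj
        rw [hu j p.2 (by omega), mul_zero])]
    rw [Finset.mul_sum]
    exact Finset.sum_congr rfl fun j _ => by ring
  rw [Finset.sum_congr rfl step, Finset.sum_comm]
  refine Finset.sum_congr rfl fun j _ => ?_
  rw [MvPowerSeries.coeff_mul, Finset.mul_sum]

include ha hb in
lemma expX_eq {g : F2} (hg : ordGE g 1) :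
    expX a b g = g + a * AA a b g 0 + b * AA a b g 1 := by
  apply MvPowerSeries.ext; intro d
  have hu : ∀ j : ℕ, ordGE ((vf a b)^[j] g) (j + 1) := ordGE_iter ha hb hg
  have hL : MvPowerSeries.coeff d (expX a b g) =
      ∑ j ∈ Finset.range (deg d + 1),
        ((j.factorial : ℂ))⁻¹ * MvPowerSeries.coeff d ((vf a b)^[j] g) := by
    refine tsum_eq_sum fun j hj => ?_
    rw [Finset.mem_range, not_lt] at hj
    rw [hu j d (by omega), mul_zero]
  rw [hL, map_add, map_add, coeff_mul_AA ha hb hg a 0 d, coeff_mul_AA ha hb hg b 1 d]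
  rw [add_assoc, ← Finset.sum_add_distrib]
  have hR : ∀ j ∈ Finset.range (deg d + 1),
      (((j + 1).factorial : ℂ))⁻¹ * MvPowerSeries.coeff d (a * pd 0 ((vf a b)^[j] g)) +
      (((j + 1).factorial : ℂ))⁻¹ * MvPowerSeries.coeff d (b * pd 1 ((vf a b)^[j] g)) =
      (((j + 1).factorial : ℂ))⁻¹ * MvPowerSeries.coeff d ((vf a b)^[j+1] g) := by
    intro j _
    rw [Function.iterate_succ_apply', ← mul_add, ← map_add]
    rfl
  rw [Finset.sum_congr rfl hR]
  rw [Finset.sum_range_succ' (fun j => ((j.factorial : ℂ))⁻¹ * MvPowerSeries.coeff d ((vf a b)^[j] g)) (deg d)]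
  rw [Finset.sum_range_succ (fun j => (((j + 1).factorial : ℂ))⁻¹ * MvPowerSeries.coeff d ((vf a b)^[j+1] g)) (deg d)]
  rw [hu (deg d + 1) d (by omega)]
  simp [add_comm]

lemma constantCoeff_AA (a b g : F2) (i : Fin 2) :
    MvPowerSeries.constantCoeff (AA a b g i) =
      MvPowerSeries.coeff (Finsupp.single i 1) g := by
  have h0 : deg (0 : Fin 2 →₀ ℕ) = 0 := by simp [deg]
  have : MvPowerSeries.constantCoeff (AA a b g i) =
      ∑ j ∈ Finset.range (deg (0 : Fin 2 →₀ ℕ) + 1),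
        (((j + 1).factorial : ℂ))⁻¹ *
          MvPowerSeries.coeff (0 : Fin 2 →₀ ℕ) (pd i ((vf a b)^[j] g)) := rfl
  rw [this, h0, Finset.sum_range_one]
  show (((1).factorial : ℂ))⁻¹ * ((((0 : Fin 2 →₀ ℕ) i : ℂ) + 1) *
      MvPowerSeries.coeff ((0 : Fin 2 →₀ ℕ) + Finsupp.single i 1) g) = _
  simp

end IsoAux

open IsoAux

/-- 0 is an isolated zero of X iff 0 is an isolated fixed point of F = Exp(X),
formalized as: (a,b) ⊇ m^N for some N iff (p,q) ⊇ m^N for some N, m = (x,y). -/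
theorem isolated_zero_iff_isolated_fixed_point (a b : F2) (ha : ordGE a 2) (hb : ordGE b 2) :
    (∃ N : ℕ, (Ideal.span {Xv, Yv}) ^ N ≤ Ideal.span {a, b}) ↔
    (∃ N : ℕ, (Ideal.span {Xv, Yv}) ^ N ≤
        Ideal.span {expX a b Xv - Xv, expX a b Yv - Yv}) := by
  have hX : ordGE Xv 1 := by
    intro d hd
    rw [Xv, MvPowerSeries.coeff_X, if_neg]
    intro h
    rw [h, deg_single] at hd; omega
  have hY : ordGE Yv 1 := by
    intro d hd
    rw [Yv, MvPowerSeries.coeff_X, if_neg]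
    intro h
    rw [h, deg_single] at hd; omega
  set A := AA a b Xv 0 with hA
  set B := AA a b Xv 1 with hB
  set C := AA a b Yv 0 with hC
  set D := AA a b Yv 1 with hD
  have hp : expX a b Xv - Xv = a * A + b * B := by
    rw [expX_eq ha hb hX]; ring
  have hq : expX a b Yv - Yv = a * C + b * D := by
    rw [expX_eq ha hb hY]; ring
  have hdet : MvPowerSeries.constantCoeff (A * D - B * C) = 1 := by
    have h1 : MvPowerSeries.constantCoeff A = 1 := by
      rw [hA, constantCoeff_AA, Xv, MvPowerSeries.coeff_X, if_pos rfl]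
    have h2 : MvPowerSeries.constantCoeff B = 0 := by
      rw [hB, constantCoeff_AA, Xv, MvPowerSeries.coeff_X, if_neg]
      simp [Finsupp.single_eq_single_iff]
    have h3 : MvPowerSeries.constantCoeff D = 1 := by
      rw [hD, constantCoeff_AA, Yv, MvPowerSeries.coeff_X, if_pos rfl]
    simp [h1, h2, h3]
  set det : F2 := A * D - B * C with hdetdef
  set e : F2 := MvPowerSeries.invOfUnit det 1 with he
  have hinv : det * e = 1 := MvPowerSeries.mul_invOfUnit det 1 (by simpa using hdet)
  have hinv' : e * (A * D - B * C) = 1 := by rw [mul_comm] at hinv; exact hinv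
  have hEq : Ideal.span ({expX a b Xv - Xv, expX a b Yv - Yv} : Set F2) =
      Ideal.span ({a, b} : Set F2) := by
    apply le_antisymm
    · rw [Ideal.span_le]
      refine Set.insert_subset_iff.2 ⟨?_, Set.singleton_subset_iff.2 ?_⟩
      · exact Ideal.mem_span_pair.2 ⟨A, B, by rw [hp]; ring⟩
      · exact Ideal.mem_span_pair.2 ⟨C, D, by rw [hq]; ring⟩
    · rw [Ideal.span_le]
      refine Set.insert_subset_iff.2 ⟨?_, Set.singleton_subset_iff.2 ?_⟩
      · refine Ideal.mem_span_pair.2 ⟨e * D, -(e * B), ?_⟩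
        rw [hp, hq]
        linear_combination a * hinv'
      · refine Ideal.mem_span_pair.2 ⟨-(e * C), e * A, ?_⟩
        rw [hp, hq]
        linear_combination b * hinv'
  rw [hEq]

end
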